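/- arXiv:2302.07112 — 2 statements merged into one kernel-verified Lean document; each statement's English description precedes it below -/
import Mathlib

section
/- Let G be a lattice in ℝⁿ and D a bounded measurable set with |D ∩ (D + g)| = 0 for all nonzero g ∈ G, and suppose |D| = d(G) (the covolume of G). Then D is a fundamental domain for G, i.e., ⋃_{g∈G}(D + g) = ℝⁿ up to a set of measure zero. -/
open MeasureTheory Pointwise

def IsEuclideanLattice {n : ℕ} (G : AddSubgroup (EuclideanSpace ℝ (Fin n))) : Prop :=
  DiscreteTopology G ∧ Submodule.span ℝ (G : Set (EuclideanSpace ℝ (Fin n))) = ⊤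

/-- A bounded measurable set whose lattice translates are pairwise essentially disjoint
and whose measure equals the covolume is a fundamental domain: its translates cover ℝⁿ
up to measure zero. -/
theorem essentially_disjoint_full_measure_is_fundamental_domain (n : ℕ)
    (G : AddSubgroup (EuclideanSpace ℝ (Fin n))) (hG : IsEuclideanLattice G)
    (b : Module.Basis (Fin n) ℝ (EuclideanSpace ℝ (Fin n)))
    (hbG : ∀ x, x ∈ G ↔ ∃ k : Fin n → ℤ, x = ∑ i, (k i : ℝ) • b i)
    (D : Set (EuclideanSpace ℝ (Fin n))) (hD : MeasurableSet D)
    (hbd : Bornology.IsBounded D)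
    (hdisj : ∀ g ∈ G, g ≠ 0 → volume (D ∩ {x | x - g ∈ D}) = 0)
    (hvol : volume D = ENNReal.ofReal |(Matrix.of fun i j => b i j).det|) :
    volume {x : EuclideanSpace ℝ (Fin n) | ∀ g ∈ G, x - g ∉ D} = 0 := by
  classical
  set L : AddSubgroup (EuclideanSpace ℝ (Fin n)) :=
    (Submodule.span ℤ (Set.range ⇑b)).toAddSubgroup with hLdef
  -- membership in L is membership in G
  have hmem : ∀ x : EuclideanSpace ℝ (Fin n), x ∈ L ↔ x ∈ G := by
    intro x
    rw [hbG]
    simp only [hLdef, Submodule.mem_toAddSubgroup, Submodule.mem_span_range_iff_exists_fun]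
    constructor
    · rintro ⟨c, rfl⟩
      exact ⟨c, by simp [Int.cast_smul_eq_zsmul]⟩
    · rintro ⟨k, rfl⟩
      exact ⟨k, by simp [Int.cast_smul_eq_zsmul]⟩
  -- L is countable
  have hcnt : Countable L := by
    have hsub : (L : Set (EuclideanSpace ℝ (Fin n)))
        ⊆ Set.range (fun k : Fin n → ℤ => ∑ i, (k i : ℝ) • b i) := by
      intro x hx
      obtain ⟨k, hk⟩ := (hbG x).1 ((hmem x).1 hx)
      exact ⟨k, hk.symm⟩
    exact ((Set.countable_range _).mono hsub).to_subtype
  -- the fundamental parallelepiped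
  set F : Set (EuclideanSpace ℝ (Fin n)) := ZSpan.fundamentalDomain b with hFdef
  have hFmeas : MeasurableSet F := ZSpan.fundamentalDomain_measurableSet b
  have hFD : IsAddFundamentalDomain L F volume := ZSpan.isAddFundamentalDomain' b volume
  -- volume of F
  have hFvol : volume F = ENNReal.ofReal |(Matrix.of fun i j => b i j).det| := by
    let f : EuclideanSpace ℝ (Fin n) ≃ₗ[ℝ] (Fin n → ℝ) := WithLp.linearEquiv 2 ℝ (Fin n → ℝ)
    have h1 : volume (ZSpan.fundamentalDomain (b.map f)) = volume F := by
      rw [← ZSpan.map_fundamentalDomain b f]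
      have himg : (⇑f) '' F = (MeasurableEquiv.toLp 2 (Fin n → ℝ)).symm.symm ⁻¹' F := by
        rw [MeasurableEquiv.preimage_symm]
        rfl
      rw [himg]
      exact (MeasurePreserving.symm _
        (EuclideanSpace.volume_preserving_symm_measurableEquiv_toLp (Fin n))).measure_preimage
        hFmeas.nullMeasurableSet
    have h2 := ZSpan.volume_fundamentalDomain (b.map f)
    rw [h1] at h2
    rw [h2]
    rfl
  have hFvolD : volume F = volume D := by rw [hFvol, hvol]
  have hFne : volume F ≠ ⊤ := by rw [hFvol]; exact ENNReal.ofReal_ne_top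
  -- translates of D described via subtraction
  have hvaddD : ∀ g : EuclideanSpace ℝ (Fin n),
      g +ᵥ D = {x : EuclideanSpace ℝ (Fin n) | x - g ∈ D} := by
    intro g
    ext x
    simp [Set.mem_vadd_set_iff_neg_vadd_mem, vadd_eq_add, sub_eq_neg_add]
  -- translates of D by distinct lattice elements are a.e. disjoint
  have hpair : Pairwise (Function.onFun (AEDisjoint volume)
      fun g : L => (g : EuclideanSpace ℝ (Fin n)) +ᵥ D) := by
    intro g g' hgg'
    have htrans : (-(g : EuclideanSpace ℝ (Fin n)))
          +ᵥ ((((g : EuclideanSpace ℝ (Fin n))) +ᵥ D) ∩ (((g' : EuclideanSpace ℝ (Fin n))) +ᵥ D))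
        = D ∩ ((((g' : EuclideanSpace ℝ (Fin n))) - g) +ᵥ D) := by
      rw [Set.vadd_set_inter, vadd_vadd, vadd_vadd, neg_add_cancel, zero_vadd, neg_add_eq_sub]
    have hm : volume ((((g : EuclideanSpace ℝ (Fin n))) +ᵥ D)
          ∩ (((g' : EuclideanSpace ℝ (Fin n))) +ᵥ D))
        = volume (D ∩ ((((g' : EuclideanSpace ℝ (Fin n))) - g) +ᵥ D)) := by
      rw [← htrans]
      exact (measure_vadd (μ := volume) _ _).symm
    have key : volume (D ∩ ((((g' : EuclideanSpace ℝ (Fin n))) - g) +ᵥ D)) = 0 := by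
      rw [hvaddD]
      refine hdisj ((g' : EuclideanSpace ℝ (Fin n)) - g) ((hmem _).1 (sub_mem g'.2 g.2)) ?_
      intro h
      exact hgg' (Subtype.ext (sub_eq_zero.mp h)).symm
    exact hm.trans key
  -- the union of the translates
  set U : Set (EuclideanSpace ℝ (Fin n)) :=
    ⋃ g : L, (g : EuclideanSpace ℝ (Fin n)) +ᵥ D with hUdef
  have hUmeas : MeasurableSet U := MeasurableSet.iUnion fun g => hD.const_vadd _
  -- F ∩ U has full measure in F
  have hsum : volume D =
      ∑' g : L, volume (((g : EuclideanSpace ℝ (Fin n)) +ᵥ D) ∩ F) := hFD.measure_eq_tsum D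
  have hFU : volume (F ∩ U) = volume F := by
    have hU : F ∩ U = ⋃ g : L, (((g : EuclideanSpace ℝ (Fin n)) +ᵥ D) ∩ F) := by
      rw [hUdef, Set.inter_iUnion]
      simp [Set.inter_comm]
    rw [hU, measure_iUnion₀ (hpair.mono fun g g' h => h.mono
        Set.inter_subset_left Set.inter_subset_left)
        (fun g => ((hD.const_vadd _).inter hFmeas).nullMeasurableSet), ← hsum, hFvolD]
  have hFdiff : volume (F \ U) = 0 := by
    have h := measure_inter_add_diff (μ := volume) F hUmeas
    rw [hFU] at h
    exact (ENNReal.add_right_inj hFne).1 (by rw [h, add_zero])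
  -- every uncovered point lies in some lattice translate of F \ U
  have hcover : {x : EuclideanSpace ℝ (Fin n) | ∀ g ∈ G, x - g ∉ D}
      ⊆ ⋃ g : L, (g : EuclideanSpace ℝ (Fin n)) +ᵥ (F \ U) := by
    intro x hx
    obtain ⟨v, hv, -⟩ := ZSpan.exist_unique_vadd_mem_fundamentalDomain b x
    have hvL : (v : EuclideanSpace ℝ (Fin n)) ∈ L := v.2
    refine Set.mem_iUnion.2 ⟨⟨-(v : EuclideanSpace ℝ (Fin n)), neg_mem hvL⟩, ?_⟩
    refine ⟨(v : EuclideanSpace ℝ (Fin n)) +ᵥ x, ⟨hv, ?_⟩, by simp [vadd_vadd]⟩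
    intro hmemU
    obtain ⟨g, hg⟩ := Set.mem_iUnion.1 hmemU
    rw [hvaddD, Set.mem_setOf_eq] at hg
    have hg2 : (v : EuclideanSpace ℝ (Fin n)) + x - (g : EuclideanSpace ℝ (Fin n)) ∈ D := hg
    rw [show (v : EuclideanSpace ℝ (Fin n)) + x - (g : EuclideanSpace ℝ (Fin n))
        = x - ((g : EuclideanSpace ℝ (Fin n)) - (v : EuclideanSpace ℝ (Fin n))) from by abel]
      at hg2
    exact hx _ ((hmem _).1 (sub_mem g.2 hvL)) hg2
  refine measure_mono_null hcover (measure_iUnion_null fun g => ?_)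
  rw [measure_vadd (μ := volume)]
  exact hFdiff
end

section
/- Let Gₖ be a sequence of lattices in ℝⁿ converging in the Kuratowski sense to a lattice G, and let Eₖ, Fₖ be measurable sets with Eₖ → E and Fₖ → F in L¹_loc, such that |Eₖ ∩ (Fₖ + hₖ)| = 0 for all k where hₖ ∈ Gₖ with hₖ → g ∈ G. Then |E ∩ (F + g)| = 0. -/
open MeasureTheory Filter

open Set in
open scoped symmDiff in
private theorem main_bound (n : ℕ)
    (Ek Fk : ℕ → Set (EuclideanSpace ℝ (Fin n)))
    (E F : Set (EuclideanSpace ℝ (Fin n)))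
    (hFm : MeasurableSet F)
    (hEconv : ∀ K : Set (EuclideanSpace ℝ (Fin n)), IsCompact K →
      Tendsto (fun k => volume ((symmDiff (Ek k) E) ∩ K)) atTop (nhds 0))
    (hFconv : ∀ K : Set (EuclideanSpace ℝ (Fin n)), IsCompact K →
      Tendsto (fun k => volume ((symmDiff (Fk k) F) ∩ K)) atTop (nhds 0))
    (hk : ℕ → EuclideanSpace ℝ (Fin n))
    (g : EuclideanSpace ℝ (Fin n))
    (hkconv : Tendsto hk atTop (nhds g))
    (hzero : ∀ k, volume (Ek k ∩ {x | x - hk k ∈ Fk k}) = 0) :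
    volume (E ∩ {x | x - g ∈ F}) = 0 := by
  set T : Set (EuclideanSpace ℝ (Fin n)) := {x | x - g ∈ F} with hT
  have key : ∀ R : ℕ, volume (E ∩ T ∩ Metric.closedBall 0 R) = 0 := by
    intro R
    set K : Set (EuclideanSpace ℝ (Fin n)) := Metric.closedBall 0 R with hKdef
    set C : ℝ := R + (‖g‖ + 1) with hCdef
    set K' : Set (EuclideanSpace ℝ (Fin n)) := Metric.closedBall 0 C with hK'def
    have hK'c : IsCompact K' := isCompact_closedBall _ _
    set s : Set (EuclideanSpace ℝ (Fin n)) := F ∩ K' with hsdef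
    have hsm : MeasurableSet s := hFm.inter measurableSet_closedBall
    have hsfin : volume s ≠ ⊤ :=
      ne_top_of_le_ne_top hK'c.measure_ne_top (measure_mono inter_subset_right)
    -- the continuous maps
    set f : ℕ → C(EuclideanSpace ℝ (Fin n), EuclideanSpace ℝ (Fin n)) :=
      fun k => ⟨fun x => x - hk k, by continuity⟩ with hfdef
    set g' : C(EuclideanSpace ℝ (Fin n), EuclideanSpace ℝ (Fin n)) :=
      ⟨fun x => x - g, by continuity⟩ with hg'def
    have hfg : Tendsto f atTop (nhds g') := by
      apply ContinuousMap.tendsto_of_tendstoLocallyUniformly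
      apply TendstoUniformly.tendstoLocallyUniformly
      rw [Metric.tendstoUniformly_iff]
      intro ε hε
      have := (Metric.tendsto_nhds.mp hkconv) ε hε
      filter_upwards [this] with k hkε x
      simpa [dist_eq_norm, hfdef, hg'def, sub_sub_sub_cancel_left] using
        (by simpa [dist_eq_norm] using hkε : ‖hk k - g‖ < ε)
    have hmp : ∀ k, MeasurePreserving (f k)
        (volume : Measure (EuclideanSpace ℝ (Fin n))) volume :=
      fun k => measurePreserving_sub_right volume (hk k)
    have hgmp : MeasurePreserving g'
        (volume : Measure (EuclideanSpace ℝ (Fin n))) volume :=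
      measurePreserving_sub_right volume g
    have t3 : Tendsto (fun k => volume ((f k ⁻¹' s) ∆ (g' ⁻¹' s))) atTop (nhds 0) :=
      tendsto_measure_symmDiff_preimage_nhds_zero hfg (Eventually.of_forall hmp) hgmp
        hsm.nullMeasurableSet hsfin
    have t1 := hEconv K (isCompact_closedBall _ _)
    have t2' := hFconv K' hK'c
    have t2 : Tendsto (fun k => volume ((fun x => x - hk k) ⁻¹' ((Fk k ∆ F) ∩ K')))
        atTop (nhds 0) := by
      have heq : ∀ k, volume ((fun x => x - hk k) ⁻¹' ((Fk k ∆ F) ∩ K'))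
          = volume ((Fk k ∆ F) ∩ K') := fun k =>
        (measurePreserving_sub_right volume (hk k)).measure_preimage_emb
          (MeasurableEquiv.subRight (hk k)).measurableEmbedding _
      simpa only [heq] using t2'
    -- eventual norm bound
    have hnorm : ∀ᶠ k in atTop, ‖hk k‖ ≤ ‖g‖ + 1 := by
      have : Tendsto (fun k => ‖hk k‖) atTop (nhds ‖g‖) := hkconv.norm
      filter_upwards [this.eventually (eventually_lt_nhds (by linarith : ‖g‖ < ‖g‖ + 1))]
        with k h using h.le
    -- the main pointwise inclusion, eventually in k
    have hincl : ∀ᶠ k in atTop,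
        E ∩ T ∩ K ⊆ (Ek k ∩ {x | x - hk k ∈ Fk k}) ∪ ((Ek k ∆ E) ∩ K)
          ∪ ((fun x => x - hk k) ⁻¹' ((Fk k ∆ F) ∩ K'))
          ∪ ((f k ⁻¹' s) ∆ (g' ⁻¹' s)) := by
      filter_upwards [hnorm] with k hkn x hx
      obtain ⟨⟨hxE, hxT⟩, hxK⟩ := hx
      have hxn : ‖x‖ ≤ (R : ℝ) := by simpa using mem_closedBall_zero_iff.mp hxK
      have hxh : ‖x - hk k‖ ≤ C := by
        calc ‖x - hk k‖ ≤ ‖x‖ + ‖hk k‖ := norm_sub_le _ _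
        _ ≤ C := by rw [hCdef]; linarith
      have hxg : ‖x - g‖ ≤ C := by
        calc ‖x - g‖ ≤ ‖x‖ + ‖g‖ := norm_sub_le _ _
        _ ≤ C := by rw [hCdef]; linarith
      by_cases hE' : x ∈ Ek k
      · by_cases hF' : x - hk k ∈ Fk k
        · exact Or.inl (Or.inl (Or.inl ⟨hE', hF'⟩))
        · by_cases hF'' : x - hk k ∈ F
          · refine Or.inl (Or.inr ?_)
            exact ⟨mem_symmDiff.mpr (Or.inr ⟨hF'', hF'⟩), mem_closedBall_zero_iff.mpr hxh⟩
          · refine Or.inr (mem_symmDiff.mpr (Or.inr ⟨?_, ?_⟩))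
            · exact mem_preimage.mpr ⟨hxT, mem_closedBall_zero_iff.mpr hxg⟩
            · intro h
              exact hF'' (mem_preimage.mp h).1
      · exact Or.inl (Or.inl (Or.inr ⟨mem_symmDiff.mpr (Or.inr ⟨hxE, hE'⟩), hxK⟩))
    have hev : ∀ᶠ k in atTop, volume (E ∩ T ∩ K) ≤
        volume ((Ek k ∆ E) ∩ K) + volume ((fun x => x - hk k) ⁻¹' ((Fk k ∆ F) ∩ K'))
          + volume ((f k ⁻¹' s) ∆ (g' ⁻¹' s)) := by
      filter_upwards [hincl] with k hsub
      calc volume (E ∩ T ∩ K) ≤ _ := measure_mono hsub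
        _ ≤ volume (Ek k ∩ {x | x - hk k ∈ Fk k}) + volume ((Ek k ∆ E) ∩ K)
            + volume ((fun x => x - hk k) ⁻¹' ((Fk k ∆ F) ∩ K'))
            + volume ((f k ⁻¹' s) ∆ (g' ⁻¹' s)) :=
          le_trans (measure_union_le _ _) (add_le_add_left (le_trans (measure_union_le _ _)
            (add_le_add_left (measure_union_le _ _) _)) _)
        _ = _ := by rw [hzero k, zero_add]
    have htend : Tendsto (fun k => volume ((Ek k ∆ E) ∩ K)
        + volume ((fun x => x - hk k) ⁻¹' ((Fk k ∆ F) ∩ K'))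
        + volume ((f k ⁻¹' s) ∆ (g' ⁻¹' s))) atTop (nhds 0) := by
      simpa using (t1.add t2).add t3
    exact le_antisymm (ge_of_tendsto htend hev) zero_le
  have hsub : E ∩ T ⊆ ⋃ R : ℕ, E ∩ T ∩ Metric.closedBall 0 R := by
    intro x hx
    obtain ⟨R, hR⟩ := exists_nat_ge ‖x‖
    exact mem_iUnion.mpr ⟨R, hx, mem_closedBall_zero_iff.mpr hR⟩
  exact measure_mono_null hsub (measure_iUnion_null key)

/-- Essential disjointness of translated sets passes to the limit under Kuratowski
convergence of lattices and L¹_loc convergence of sets. -/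
theorem essential_disjointness_passes_to_limit (n : ℕ)
    (Gk : ℕ → AddSubgroup (EuclideanSpace ℝ (Fin n)))
    (G : AddSubgroup (EuclideanSpace ℝ (Fin n)))
    (hGk : ∀ k, IsEuclideanLattice (Gk k)) (hG : IsEuclideanLattice G)
    (hKur : (G : Set (EuclideanSpace ℝ (Fin n))) =
      {x | Tendsto (fun k => Metric.infDist x (Gk k : Set (EuclideanSpace ℝ (Fin n))))
        atTop (nhds 0)})
    (Ek Fk : ℕ → Set (EuclideanSpace ℝ (Fin n)))
    (E F : Set (EuclideanSpace ℝ (Fin n)))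
    (hEkm : ∀ k, MeasurableSet (Ek k)) (hFkm : ∀ k, MeasurableSet (Fk k))
    (hEm : MeasurableSet E) (hFm : MeasurableSet F)
    (hEconv : ∀ K : Set (EuclideanSpace ℝ (Fin n)), IsCompact K →
      Tendsto (fun k => volume ((symmDiff (Ek k) E) ∩ K)) atTop (nhds 0))
    (hFconv : ∀ K : Set (EuclideanSpace ℝ (Fin n)), IsCompact K →
      Tendsto (fun k => volume ((symmDiff (Fk k) F) ∩ K)) atTop (nhds 0))
    (hk : ℕ → EuclideanSpace ℝ (Fin n)) (hkmem : ∀ k, hk k ∈ Gk k)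
    (g : EuclideanSpace ℝ (Fin n)) (hgG : g ∈ G)
    (hkconv : Tendsto hk atTop (nhds g))
    (hzero : ∀ k, volume (Ek k ∩ {x | x - hk k ∈ Fk k}) = 0) :
    volume (E ∩ {x | x - g ∈ F}) = 0 := by
  exact main_bound n Ek Fk E F hFm hEconv hFconv hk g hkconv hzero
end
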